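/- Change of variables for the positive side: ∫₀^∞ n([φ₊(s),∞)) ds = ∫_{(0,∞)} (1 + μ̄(s) − μ̄(G_μ⁻¹(D_μ(s))))⁻¹ dμ(s) (equality in [0,∞]). -/

import Mathlib

open MeasureTheory Filter
open scoped ENNReal Topology Classical

/-- Topological support of a Borel measure on ℝ. -/
def measSupport (μ : MeasureTheory.Measure ℝ) : Set ℝ :=
  {x | ∀ U : Set ℝ, IsOpen U → x ∈ U → 0 < μ U}

/-- `D_μ(y) = ∫_{[0,y]} n([s,∞))⁻¹ dμ(s)` for `y ≥ 0` (equal to `0` for `y < 0`). -/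
noncomputable def Dmu (μ n : MeasureTheory.Measure ℝ) (y : ℝ) : ℝ≥0∞ :=
  ∫⁻ s in Set.Icc (0 : ℝ) y, (n (Set.Ici s))⁻¹ ∂μ

/-- `G_μ(x) = ∫_{[x,0]} n((−∞,s])⁻¹ dμ(s)` for `x ≤ 0` (equal to `0` for `x > 0`). -/
noncomputable def Gmu (μ n : MeasureTheory.Measure ℝ) (x : ℝ) : ℝ≥0∞ :=
  ∫⁻ s in Set.Icc x (0 : ℝ), (n (Set.Iic s))⁻¹ ∂μ

/-- The set `{y ≥ 0 : D_μ(y) > v}`; its infimum is the right-continuous inverse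
`D_μ⁻¹(v)`, with `D_μ⁻¹(v) = ∞` when the set is empty. -/
def DinvSet (μ n : MeasureTheory.Measure ℝ) (v : ℝ≥0∞) : Set ℝ :=
  {y : ℝ | 0 ≤ y ∧ v < Dmu μ n y}

/-- The set `{x ≤ 0 : G_μ(x) > v}`; its supremum is the right-continuous inverse
`G_μ⁻¹(v)`, with `G_μ⁻¹(v) = −∞` when the set is empty. -/
def GinvSet (μ n : MeasureTheory.Measure ℝ) (v : ℝ≥0∞) : Set ℝ :=
  {x : ℝ | x ≤ 0 ∧ v < Gmu μ n x}

/-- `μ̄(D_μ⁻¹(v))`, with the convention `μ̄(∞) = 0`. -/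
noncomputable def mubarDinv (μ n : MeasureTheory.Measure ℝ) (v : ℝ≥0∞) : ℝ :=
  if (DinvSet μ n v).Nonempty then (μ (Set.Ici (sInf (DinvSet μ n v)))).toReal else 0

/-- `μ̄(G_μ⁻¹(v))`, with the convention `μ̄(−∞) = 1`. -/
noncomputable def mubarGinv (μ n : MeasureTheory.Measure ℝ) (v : ℝ≥0∞) : ℝ :=
  if (GinvSet μ n v).Nonempty then (μ (Set.Ici (sSup (GinvSet μ n v)))).toReal else 1

/-- `n([D_μ⁻¹(v),∞))`, with the convention that it is `0` when `D_μ⁻¹(v) = ∞`. -/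
noncomputable def nDinv (μ n : MeasureTheory.Measure ℝ) (v : ℝ≥0∞) : ℝ≥0∞ :=
  if (DinvSet μ n v).Nonempty then n (Set.Ici (sInf (DinvSet μ n v))) else 0

/-- `n((−∞,G_μ⁻¹(v)])`, with the convention that it is `0` when `G_μ⁻¹(v) = −∞`. -/
noncomputable def nGinv (μ n : MeasureTheory.Measure ℝ) (v : ℝ≥0∞) : ℝ≥0∞ :=
  if (GinvSet μ n v).Nonempty then n (Set.Iic (sSup (GinvSet μ n v))) else 0

/-- The integrand `[n([s,∞)) · (1 + μ̄(s) − μ̄(G_μ⁻¹(D_μ(s))))]⁻¹` of `ψ₊`. -/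
noncomputable def psiPlusIntegrand (μ n : MeasureTheory.Measure ℝ) (s : ℝ) : ℝ≥0∞ :=
  (n (Set.Ici s) *
    ENNReal.ofReal (1 + (μ (Set.Ici s)).toReal - mubarGinv μ n (Dmu μ n s)))⁻¹

/-- `ψ₊(y) = ∫_{[0,y]} [n([s,∞)) · (1 + μ̄(s) − μ̄(G_μ⁻¹(D_μ(s))))]⁻¹ dμ(s)`. -/
noncomputable def psiPlus (μ n : MeasureTheory.Measure ℝ) (y : ℝ) : ℝ≥0∞ :=
  ∫⁻ s in Set.Icc (0 : ℝ) y, psiPlusIntegrand μ n s ∂μ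

/-- The integrand `[n((−∞,s]) · (1 + μ̄(D_μ⁻¹(G_μ(s))) − μ̄(s))]⁻¹` of `ψ₋`. -/
noncomputable def psiMinusIntegrand (μ n : MeasureTheory.Measure ℝ) (s : ℝ) : ℝ≥0∞ :=
  (n (Set.Iic s) *
    ENNReal.ofReal (1 + mubarDinv μ n (Gmu μ n s) - (μ (Set.Ici s)).toReal))⁻¹

/-- `ψ₋(z) = ∫_{[−z,0]} [n((−∞,s]) · (1 + μ̄(D_μ⁻¹(G_μ(s))) − μ̄(s))]⁻¹ dμ(s)`. -/
noncomputable def psiMinus (μ n : MeasureTheory.Measure ℝ) (z : ℝ) : ℝ≥0∞ :=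
  ∫⁻ s in Set.Icc (-z) (0 : ℝ), psiMinusIntegrand μ n s ∂μ

/-- The set `{y ≥ 0 : ψ₊(y) ≥ l}` whose infimum is the left-continuous inverse `φ₊(l)`. -/
def phiPlusSet (μ n : MeasureTheory.Measure ℝ) (l : ℝ) : Set ℝ :=
  {y : ℝ | 0 ≤ y ∧ ENNReal.ofReal l ≤ psiPlus μ n y}

/-- The set `{z ≥ 0 : ψ₋(z) ≥ l}` whose infimum is the left-continuous inverse `φ₋(l)`. -/
def phiMinusSet (μ n : MeasureTheory.Measure ℝ) (l : ℝ) : Set ℝ :=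
  {z : ℝ | 0 ≤ z ∧ ENNReal.ofReal l ≤ psiMinus μ n z}

/-- `φ₊(l) = inf{y ≥ 0 : ψ₊(y) ≥ l}`. -/
noncomputable def phiPlus (μ n : MeasureTheory.Measure ℝ) (l : ℝ) : ℝ :=
  sInf (phiPlusSet μ n l)

/-- `φ₋(l) = inf{z ≥ 0 : ψ₋(z) ≥ l}`. -/
noncomputable def phiMinus (μ n : MeasureTheory.Measure ℝ) (l : ℝ) : ℝ :=
  sInf (phiMinusSet μ n l)

/-- `n([φ₊(l),∞))`, with the convention that it is `0` when `φ₊(l) = inf ∅ = ∞`. -/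
noncomputable def nPhiPlus (μ n : MeasureTheory.Measure ℝ) (l : ℝ) : ℝ≥0∞ :=
  if (phiPlusSet μ n l).Nonempty then n (Set.Ici (phiPlus μ n l)) else 0

/-- `n((−∞,−φ₋(l)])`, with the convention that it is `0` when `φ₋(l) = inf ∅ = ∞`. -/
noncomputable def nPhiMinus (μ n : MeasureTheory.Measure ℝ) (l : ℝ) : ℝ≥0∞ :=
  if (phiMinusSet μ n l).Nonempty then n (Set.Iic (-(phiMinus μ n l))) else 0

/-- `∫₀^L [n((−∞,−φ₋(s)]) + n([φ₊(s),∞))] ds` for an upper limit `L ∈ [0,∞]`. -/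
noncomputable def cutInt (μ n : MeasureTheory.Measure ℝ) (L : ℝ≥0∞) : ℝ≥0∞ :=
  ∫⁻ s in {s : ℝ | 0 < s ∧ ENNReal.ofReal s < L},
    (nPhiMinus μ n s + nPhiPlus μ n s)

/-- `exp(−a)` for `a ∈ [0,∞]`, with `exp(−∞) = 0`. -/
noncomputable def expNegE (a : ℝ≥0∞) : ℝ :=
  if a = ⊤ then 0 else Real.exp (-a.toReal)

/-- `ρ(l) = exp(−∫₀^l [n((−∞,−φ₋(s)]) + n([φ₊(s),∞))] ds)`. -/
noncomputable def rho (μ n : MeasureTheory.Measure ℝ) (l : ℝ) : ℝ≥0∞ :=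
  ENNReal.ofReal (expNegE (cutInt μ n (ENNReal.ofReal l)))


section CoVaux

open MeasureTheory Set

variable (μ n : MeasureTheory.Measure ℝ)

lemma compl_measSupport_null : μ (measSupport μ)ᶜ = 0 := by
  obtain ⟨T, hTc, hTsub, hTU⟩ := TopologicalSpace.isOpen_sUnion_countable
    {U : Set ℝ | IsOpen U ∧ μ U = 0} (fun U hU => hU.1)
  have h1 : (measSupport μ)ᶜ ⊆ ⋃₀ T := by
    rw [hTU]
    intro x hx
    simp only [measSupport, Set.mem_compl_iff, Set.mem_setOf_eq] at hx
    push_neg at hx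
    obtain ⟨U, hUo, hxU, hμU⟩ := hx
    exact ⟨U, ⟨hUo, le_antisymm hμU zero_le⟩, hxU⟩
  exact measure_mono_null h1
    ((measure_sUnion_null_iff hTc).2 fun s hs => (hTsub hs).2)

lemma monotone_psiPlus : Monotone (psiPlus μ n) :=
  fun _ _ hab => lintegral_mono_set (Set.Icc_subset_Icc_right hab)

lemma psiPlus_nonpos (h0 : μ {0} = 0) {t : ℝ} (ht : t ≤ 0) : psiPlus μ n t = 0 := by
  have hsub : Set.Icc (0:ℝ) t ⊆ {0} := by
    intro x hx
    have : x = 0 := le_antisymm (hx.2.trans ht) hx.1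
    simp [this]
  have : μ (Set.Icc (0:ℝ) t) = 0 := measure_mono_null hsub h0
  unfold psiPlus
  rw [Measure.restrict_eq_zero.mpr this, lintegral_zero_measure]

lemma monotone_Dmu : Monotone (Dmu μ n) :=
  fun _ _ hab => lintegral_mono_set (Set.Icc_subset_Icc_right hab)

lemma mubarGinv_le_one [MeasureTheory.IsProbabilityMeasure μ] (v : ℝ≥0∞) :
    mubarGinv μ n v ≤ 1 := by
  unfold mubarGinv
  split_ifs with h
  · calc (μ (Set.Ici (sSup (GinvSet μ n v)))).toReal
        ≤ (1 : ℝ≥0∞).toReal := ENNReal.toReal_mono ENNReal.one_ne_top prob_le_one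
    _ = 1 := by simp
  · exact le_rfl

lemma monotone_mubarGinv [MeasureTheory.IsProbabilityMeasure μ] :
    Monotone (mubarGinv μ n) := by
  intro v v' hvv'
  by_cases h' : (GinvSet μ n v').Nonempty
  · have hsub : GinvSet μ n v' ⊆ GinvSet μ n v :=
      fun x hx => ⟨hx.1, lt_of_le_of_lt hvv' hx.2⟩
    have h : (GinvSet μ n v).Nonempty := h'.mono hsub
    have hb : BddAbove (GinvSet μ n v) := ⟨0, fun x hx => hx.1⟩
    have hsup : sSup (GinvSet μ n v') ≤ sSup (GinvSet μ n v) := csSup_le_csSup hb h' hsub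
    simp only [mubarGinv, if_pos h, if_pos h']
    exact ENNReal.toReal_mono (measure_ne_top μ _)
      (measure_mono (Set.Ici_subset_Ici.mpr hsup))
  · have : mubarGinv μ n v' = 1 := by simp [mubarGinv, h']
    rw [this]
    exact mubarGinv_le_one μ n v

lemma measurable_n_Ici : Measurable fun s : ℝ => n (Set.Ici s) := by
  have : Antitone fun s : ℝ => n (Set.Ici s) :=
    fun a b hab => measure_mono (Set.Ici_subset_Ici.mpr hab)
  exact this.measurable

lemma measurable_mubar [MeasureTheory.IsProbabilityMeasure μ] :
    Measurable fun s : ℝ => (μ (Set.Ici s)).toReal := by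
  have : Antitone fun s : ℝ => (μ (Set.Ici s)).toReal := fun a b hab =>
    ENNReal.toReal_mono (measure_ne_top μ _) (measure_mono (Set.Ici_subset_Ici.mpr hab))
  exact this.measurable

lemma measurable_Afun [MeasureTheory.IsProbabilityMeasure μ] :
    Measurable fun s : ℝ =>
      ENNReal.ofReal (1 + (μ (Set.Ici s)).toReal - mubarGinv μ n (Dmu μ n s)) := by
  have h2 : Monotone fun s : ℝ => mubarGinv μ n (Dmu μ n s) :=
    (monotone_mubarGinv μ n).comp (monotone_Dmu μ n)
  exact ((measurable_const.add (measurable_mubar μ)).sub h2.measurable).ennreal_ofReal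

lemma measurable_psiPlusIntegrand [MeasureTheory.IsProbabilityMeasure μ] :
    Measurable (psiPlusIntegrand μ n) := by
  unfold psiPlusIntegrand
  exact ((measurable_n_Ici n).mul (measurable_Afun μ n)).inv

lemma ofReal_mubar_le_A [MeasureTheory.IsProbabilityMeasure μ] (s : ℝ) :
    ENNReal.ofReal ((μ (Set.Ici s)).toReal) ≤
      ENNReal.ofReal (1 + (μ (Set.Ici s)).toReal - mubarGinv μ n (Dmu μ n s)) := by
  apply ENNReal.ofReal_le_ofReal
  have := mubarGinv_le_one μ n (Dmu μ n s)
  linarith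

lemma psiPlus_rightCont [MeasureTheory.IsProbabilityMeasure μ]
    (hnsupp : ∀ x ∈ measSupport μ, 0 < n (Set.Iic x) ∧ 0 < n (Set.Ici x))
    (t : ℝ) (ht : 0 ≤ t) (c : ℝ≥0∞) (hc : ∀ t' : ℝ, t < t' → c ≤ psiPlus μ n t') :
    c ≤ psiPlus μ n t := by
  have hdisj : ∀ t' : ℝ, Disjoint (Set.Icc (0:ℝ) t) (Set.Ioc t t') := by
    intro t'
    rw [Set.disjoint_left]
    intro x hx hx'
    exact absurd hx.2 (not_le.mpr hx'.1)
  by_cases hμt : μ (Set.Ioi t) = 0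
  · have h1 : psiPlus μ n (t + 1) = psiPlus μ n t := by
      unfold psiPlus
      rw [← Set.Icc_union_Ioc_eq_Icc ht (by linarith : t ≤ t + 1),
        lintegral_union measurableSet_Ioc (hdisj (t + 1))]
      have h0 : μ (Set.Ioc t (t + 1)) = 0 :=
        measure_mono_null Set.Ioc_subset_Ioi_self hμt
      rw [Measure.restrict_eq_zero.mpr h0, lintegral_zero_measure, add_zero]
    calc c ≤ psiPlus μ n (t + 1) := hc _ (by linarith)
    _ = _ := h1
  · obtain ⟨x₀, hx₀s, hx₀t⟩ : ∃ x₀ ∈ measSupport μ, t < x₀ := by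
      by_contra h
      push_neg at h
      apply hμt
      refine measure_mono_null ?_ (compl_measSupport_null μ)
      intro x hx
      exact fun hxs => absurd (h x hxs) (not_le.mpr hx)
    set m : ℝ := (t + x₀) / 2 with hm
    have htm : t < m := by rw [hm]; linarith
    have hmx : m < x₀ := by rw [hm]; linarith
    have hμm : 0 < μ (Set.Ici m) := by
      have h1 : (0:ℝ≥0∞) < μ (Set.Ioi m) := hx₀s (Set.Ioi m) isOpen_Ioi hmx
      exact h1.trans_le (measure_mono Set.Ioi_subset_Ici_self)
    have hnm : 0 < n (Set.Ici m) :=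
      lt_of_lt_of_le (hnsupp x₀ hx₀s).2 (measure_mono (Set.Ici_subset_Ici.mpr hmx.le))
    set C : ℝ≥0∞ := (n (Set.Ici m) * ENNReal.ofReal ((μ (Set.Ici m)).toReal))⁻¹ with hC
    have hCne : C ≠ ⊤ := by
      rw [hC, Ne, ENNReal.inv_eq_top]
      intro h
      rcases mul_eq_zero.mp h with h | h
      · exact hnm.ne' h
      · rw [ENNReal.ofReal_eq_zero] at h
        have h2 : 0 < (μ (Set.Ici m)).toReal :=
          ENNReal.toReal_pos hμm.ne' (measure_ne_top μ _)
        linarith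
    have hg : ∀ s ∈ Set.Ioc t m, psiPlusIntegrand μ n s ≤ C := by
      intro s hs
      rw [psiPlusIntegrand, hC]
      apply ENNReal.inv_le_inv'
      apply mul_le_mul'
      · exact measure_mono (Set.Ici_subset_Ici.mpr hs.2)
      · refine le_trans ?_ (ofReal_mubar_le_A μ n s)
        apply ENNReal.ofReal_le_ofReal
        exact ENNReal.toReal_mono (measure_ne_top μ _)
          (measure_mono (Set.Ici_subset_Ici.mpr hs.2))
    have key : ∀ t' ∈ Set.Ioc t m,
        psiPlus μ n t' ≤ psiPlus μ n t + C * μ (Set.Ioc t t') := by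
      intro t' ht'
      unfold psiPlus
      rw [← Set.Icc_union_Ioc_eq_Icc ht ht'.1.le,
        lintegral_union measurableSet_Ioc (hdisj t')]
      apply add_le_add_right
      calc ∫⁻ s in Set.Ioc t t', psiPlusIntegrand μ n s ∂μ
          ≤ ∫⁻ _ in Set.Ioc t t', C ∂μ :=
            setLIntegral_mono' measurableSet_Ioc
              (fun s hs => hg s ⟨hs.1, hs.2.trans ht'.2⟩)
      _ = C * μ (Set.Ioc t t') := setLIntegral_const _ _
    set u : ℕ → ℝ := fun k => t + (m - t) / (k + 1) with hu
    have hu_mem : ∀ k : ℕ, u k ∈ Set.Ioc t m := by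
      intro k
      constructor
      · have h1 : 0 < (m - t) / ((k:ℝ) + 1) := div_pos (by linarith) (by positivity)
        simp only [hu]; linarith
      · have hk0 : (0:ℝ) ≤ (k:ℝ) := Nat.cast_nonneg k
        have h1 : (m - t) / ((k:ℝ) + 1) ≤ m - t :=
          div_le_self (by linarith) (by linarith)
        simp only [hu]; linarith
    have hanti : Antitone fun k : ℕ => Set.Ioc t (u k) := by
      intro a b hab
      apply Set.Ioc_subset_Ioc_right
      simp only [hu]
      have hab' : (a:ℝ) + 1 ≤ (b:ℝ) + 1 := by exact_mod_cast Nat.succ_le_succ hab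
      gcongr
    have hiInter : (⋂ k : ℕ, Set.Ioc t (u k)) = (∅ : Set ℝ) := by
      ext x
      simp only [Set.mem_iInter, Set.mem_Ioc, Set.mem_empty_iff_false, iff_false]
      push_neg
      by_cases hxt0 : t < x
      · obtain ⟨k, hk⟩ := exists_nat_gt ((m - t) / (x - t))
        refine ⟨k, fun _ => ?_⟩
        have hxt : 0 < x - t := by linarith
        have h1 : (m - t) / (x - t) < (k:ℝ) + 1 := by linarith
        have h2 : m - t < ((k:ℝ) + 1) * (x - t) := by
          rwa [div_lt_iff₀ hxt] at h1
        have h3 : (m - t) / ((k:ℝ) + 1) < x - t := by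
          rw [div_lt_iff₀ (by positivity)]
          linarith [h2]
        simp only [hu]
        linarith
      · exact ⟨0, fun hx => absurd hx hxt0⟩
    have htend : Filter.Tendsto (fun k : ℕ => μ (Set.Ioc t (u k))) Filter.atTop (𝓝 0) := by
      have h1 := tendsto_measure_iInter_atTop (μ := μ)
        (fun k => measurableSet_Ioc.nullMeasurableSet) hanti ⟨0, measure_ne_top μ _⟩
      rw [hiInter] at h1
      simpa [Function.comp_def] using h1
    have htend2 : Filter.Tendsto (fun k : ℕ => psiPlus μ n t + C * μ (Set.Ioc t (u k)))
        Filter.atTop (𝓝 (psiPlus μ n t)) := by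
      have h1 : Filter.Tendsto (fun k : ℕ => C * μ (Set.Ioc t (u k))) Filter.atTop (𝓝 0) := by
        have h2 := ENNReal.Tendsto.const_mul (a := C) htend (Or.inr hCne)
        simpa using h2
      have h3 := h1.const_add (psiPlus μ n t)
      simpa using h3
    refine ge_of_tendsto' htend2 fun k => ?_
    calc c ≤ psiPlus μ n (u k) := hc _ (hu_mem k).1
    _ ≤ _ := key _ (hu_mem k)

lemma measurableSet_psiPlus_ge (c : ℝ≥0∞) :
    MeasurableSet {t : ℝ | c ≤ psiPlus μ n t} :=
  (monotone_psiPlus μ n).measurable measurableSet_Ici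

lemma nPhiPlus_eq [MeasureTheory.IsProbabilityMeasure μ]
    (hatomless : ∀ x : ℝ, μ {x} = 0)
    (hnsupp : ∀ x ∈ measSupport μ, 0 < n (Set.Iic x) ∧ 0 < n (Set.Ici x))
    {s : ℝ} (hs : 0 < s) :
    nPhiPlus μ n s = n.restrict (Set.Ioi 0) {t : ℝ | ENNReal.ofReal s ≤ psiPlus μ n t} := by
  rw [Measure.restrict_apply (measurableSet_psiPlus_ge μ n _)]
  have hpz : psiPlus μ n 0 = 0 := psiPlus_nonpos μ n (hatomless 0) le_rfl
  by_cases hne : (phiPlusSet μ n s).Nonempty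
  · rw [nPhiPlus, if_pos hne]
    congr 1
    have hbdd : BddBelow (phiPlusSet μ n s) := ⟨0, fun y hy => hy.1⟩
    have hinf0 : 0 ≤ sInf (phiPlusSet μ n s) := le_csInf hne fun y hy => hy.1
    apply Set.eq_of_subset_of_subset
    · intro t ht
      have ht' : sInf (phiPlusSet μ n s) ≤ t := ht
      have hts : ENNReal.ofReal s ≤ psiPlus μ n t := by
        apply psiPlus_rightCont μ n hnsupp t (le_trans hinf0 ht')
        intro t' htt'
        obtain ⟨y, hy, hyt⟩ := (csInf_lt_iff hbdd hne).mp (lt_of_le_of_lt ht' htt')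
        exact hy.2.trans (monotone_psiPlus μ n hyt.le)
      have htpos : (0:ℝ) < t := by
        by_contra h
        push_neg at h
        have h1 : psiPlus μ n t = 0 := psiPlus_nonpos μ n (hatomless 0) h
        rw [h1, le_zero_iff, ENNReal.ofReal_eq_zero] at hts
        linarith
      exact ⟨hts, htpos⟩
    · rintro t ⟨htcond, ht0⟩
      have ht0' : (0:ℝ) < t := ht0
      exact csInf_le hbdd ⟨ht0'.le, htcond⟩
  · rw [nPhiPlus, if_neg hne]
    have h1 : {t : ℝ | ENNReal.ofReal s ≤ psiPlus μ n t} ∩ Set.Ioi 0 = ∅ := by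
      ext t
      simp only [Set.mem_inter_iff, Set.mem_setOf_eq, Set.mem_Ioi,
        Set.mem_empty_iff_false, iff_false, not_and]
      intro h1 h2
      exact hne ⟨t, h2.le, h1⟩
    rw [h1, measure_empty]

lemma lint_indicator_volume (c : ℝ≥0∞) :
    (∫⁻ s in Set.Ioi (0:ℝ), (if ENNReal.ofReal s ≤ c then (1:ℝ≥0∞) else 0)) = c := by
  have hmeas : MeasurableSet {s : ℝ | ENNReal.ofReal s ≤ c} :=
    ENNReal.measurable_ofReal measurableSet_Iic
  have h1 : (∫⁻ s in Set.Ioi (0:ℝ), (if ENNReal.ofReal s ≤ c then (1:ℝ≥0∞) else 0))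
      = volume ({s : ℝ | ENNReal.ofReal s ≤ c} ∩ Set.Ioi 0) := by
    rw [← Measure.restrict_apply hmeas, ← setLIntegral_one,
      ← lintegral_indicator hmeas]
    apply lintegral_congr
    intro x
    simp [Set.indicator_apply]
  rw [h1]
  rcases eq_or_ne c ⊤ with hc | hc
  · have h2 : {s : ℝ | ENNReal.ofReal s ≤ c} ∩ Set.Ioi 0 = Set.Ioi 0 := by
      rw [Set.inter_eq_right]
      intro x _
      simp [hc]
    rw [h2, Real.volume_Ioi, hc]
  · have h2 : {s : ℝ | ENNReal.ofReal s ≤ c} ∩ Set.Ioi 0 = Set.Ioc 0 c.toReal := by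
      ext x
      simp only [Set.mem_inter_iff, Set.mem_setOf_eq, Set.mem_Ioi, Set.mem_Ioc]
      rw [ENNReal.ofReal_le_iff_le_toReal hc]
      tauto
    rw [h2, Real.volume_Ioc, sub_zero, ENNReal.ofReal_toReal hc]

lemma sigmaFinite_n_restrict (hnfin : ∀ s : ℝ, 0 < s → n (Set.Ici s) < ⊤) :
    MeasureTheory.SigmaFinite (n.restrict (Set.Ioi 0)) := by
  refine ⟨⟨⟨fun k => Set.Iic 0 ∪ Set.Ici (1 / ((k:ℝ) + 1)), fun _ => trivial, ?_, ?_⟩⟩⟩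
  · intro k
    rw [Measure.restrict_apply (measurableSet_Iic.union measurableSet_Ici)]
    refine lt_of_le_of_lt (measure_mono ?_) (hnfin (1 / ((k:ℝ) + 1)) (by positivity))
    rintro x ⟨h1 | h1, h2⟩
    · exact absurd (Set.mem_Ioi.mp h2) (not_lt.mpr h1)
    · exact h1
  · ext x
    simp only [Set.mem_iUnion, Set.mem_union, Set.mem_Iic, Set.mem_Ici, Set.mem_univ, iff_true]
    rcases le_or_gt x 0 with h | h
    · exact ⟨0, Or.inl h⟩
    · obtain ⟨k, hk⟩ := exists_nat_gt (1 / x)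
      refine ⟨k, Or.inr ?_⟩
      have h1 : 1 / x < (k:ℝ) + 1 := by linarith
      have h2 : 1 < (((k:ℝ) + 1)) * x := by
        rwa [div_lt_iff₀ h] at h1
      rw [div_le_iff₀ (by positivity)]
      nlinarith

end CoVaux

/-- Change of variables for the positive side:
`∫₀^∞ n([φ₊(s),∞)) ds = ∫_{(0,∞)} (1 + μ̄(s) − μ̄(G_μ⁻¹(D_μ(s))))⁻¹ dμ(s)`
(equality in `[0,∞]`). -/
theorem changeOfVariablesPositiveSide
    (μ n : MeasureTheory.Measure ℝ) [MeasureTheory.IsProbabilityMeasure μ]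
    (hatomless : ∀ x : ℝ, μ {x} = 0)
    (hneg : 0 < μ (Set.Iio (0 : ℝ))) (hpos : 0 < μ (Set.Ioi (0 : ℝ)))
    (hnfin : ∀ s : ℝ, 0 < s → n (Set.Ici s) < ⊤ ∧ n (Set.Iic (-s)) < ⊤)
    (hnsupp : ∀ x ∈ measSupport μ, 0 < n (Set.Iic x) ∧ 0 < n (Set.Ici x))
    (hcompat : (⨆ y : ℝ, Dmu μ n y) = (⨆ x : ℝ, Gmu μ n x))
    :
    (∫⁻ s in Set.Ioi (0 : ℝ), nPhiPlus μ n s) =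
      ∫⁻ s in Set.Ioi (0 : ℝ),
        (ENNReal.ofReal (1 + (μ (Set.Ici s)).toReal - mubarGinv μ n (Dmu μ n s)))⁻¹ ∂μ := by
  classical
  haveI hSF : MeasureTheory.SigmaFinite (n.restrict (Set.Ioi 0)) :=
    sigmaFinite_n_restrict n (fun s hs => (hnfin s hs).1)
  have step1 : (∫⁻ s in Set.Ioi (0:ℝ), nPhiPlus μ n s)
      = ∫⁻ s in Set.Ioi (0:ℝ), ∫⁻ t,
          (if ENNReal.ofReal s ≤ psiPlus μ n t then (1:ℝ≥0∞) else 0)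
          ∂(n.restrict (Set.Ioi 0)) := by
    apply MeasureTheory.setLIntegral_congr_fun measurableSet_Ioi
    intro s hs
    rw [nPhiPlus_eq μ n hatomless hnsupp hs,
      ← MeasureTheory.lintegral_indicator_one (measurableSet_psiPlus_ge μ n _)]
    apply MeasureTheory.lintegral_congr
    intro t
    simp [Set.indicator_apply]
  have hmeasF : Measurable (Function.uncurry fun (s t : ℝ) =>
      (if ENNReal.ofReal s ≤ psiPlus μ n t then (1:ℝ≥0∞) else 0)) := by
    have hset : MeasurableSet {p : ℝ × ℝ | ENNReal.ofReal p.1 ≤ psiPlus μ n p.2} :=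
      measurableSet_le (ENNReal.measurable_ofReal.comp measurable_fst)
        ((monotone_psiPlus μ n).measurable.comp measurable_snd)
    exact Measurable.ite hset measurable_const measurable_const
  have step3 : (∫⁻ s in Set.Ioi (0:ℝ), ∫⁻ t,
        (if ENNReal.ofReal s ≤ psiPlus μ n t then (1:ℝ≥0∞) else 0)
        ∂(n.restrict (Set.Ioi 0)))
      = ∫⁻ t, (∫⁻ s in Set.Ioi (0:ℝ),
          (if ENNReal.ofReal s ≤ psiPlus μ n t then (1:ℝ≥0∞) else 0))
          ∂(n.restrict (Set.Ioi 0)) :=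
    MeasureTheory.lintegral_lintegral_swap hmeasF.aemeasurable
  have step4 : (∫⁻ t, (∫⁻ s in Set.Ioi (0:ℝ),
        (if ENNReal.ofReal s ≤ psiPlus μ n t then (1:ℝ≥0∞) else 0))
        ∂(n.restrict (Set.Ioi 0)))
      = ∫⁻ t, psiPlus μ n t ∂(n.restrict (Set.Ioi 0)) :=
    MeasureTheory.lintegral_congr fun t => lint_indicator_volume (psiPlus μ n t)
  have step5 : (∫⁻ t, psiPlus μ n t ∂(n.restrict (Set.Ioi 0)))
      = ∫⁻ t, ∫⁻ y, (if 0 ≤ y ∧ y ≤ t then psiPlusIntegrand μ n y else 0) ∂μ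
          ∂(n.restrict (Set.Ioi 0)) := by
    apply MeasureTheory.lintegral_congr
    intro t
    unfold psiPlus
    rw [← MeasureTheory.lintegral_indicator measurableSet_Icc]
    apply MeasureTheory.lintegral_congr
    intro y
    simp [Set.indicator_apply, Set.mem_Icc]
  have hmeasF2 : Measurable (Function.uncurry fun (t y : ℝ) =>
      (if 0 ≤ y ∧ y ≤ t then psiPlusIntegrand μ n y else 0)) := by
    have hset : MeasurableSet {p : ℝ × ℝ | 0 ≤ p.2 ∧ p.2 ≤ p.1} :=
      (measurableSet_le measurable_const measurable_snd).inter
        (measurableSet_le measurable_snd measurable_fst)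
    exact Measurable.ite hset
      ((measurable_psiPlusIntegrand μ n).comp measurable_snd) measurable_const
  have step6 : (∫⁻ t, ∫⁻ y, (if 0 ≤ y ∧ y ≤ t then psiPlusIntegrand μ n y else 0) ∂μ
        ∂(n.restrict (Set.Ioi 0)))
      = ∫⁻ y, (∫⁻ t, (if 0 ≤ y ∧ y ≤ t then psiPlusIntegrand μ n y else 0)
          ∂(n.restrict (Set.Ioi 0))) ∂μ :=
    MeasureTheory.lintegral_lintegral_swap hmeasF2.aemeasurable
  have step7 : ∀ y : ℝ, (∫⁻ t, (if 0 ≤ y ∧ y ≤ t then psiPlusIntegrand μ n y else 0)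
        ∂(n.restrict (Set.Ioi 0)))
      = if 0 ≤ y then psiPlusIntegrand μ n y * n (Set.Ici y ∩ Set.Ioi 0) else 0 := by
    intro y
    by_cases hy : 0 ≤ y
    · rw [if_pos hy]
      have h1 : (fun t : ℝ => if 0 ≤ y ∧ y ≤ t then psiPlusIntegrand μ n y else 0)
          = (Set.Ici y).indicator (fun _ => psiPlusIntegrand μ n y) := by
        ext t
        simp [Set.indicator_apply, hy, Set.mem_Ici]
      rw [h1, MeasureTheory.lintegral_indicator measurableSet_Ici,
        MeasureTheory.setLIntegral_const,
        MeasureTheory.Measure.restrict_apply measurableSet_Ici]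
    · rw [if_neg hy]
      have h1 : (fun t : ℝ => if 0 ≤ y ∧ y ≤ t then psiPlusIntegrand μ n y else 0)
          = fun _ => 0 := by
        ext t
        simp [hy]
      rw [h1, MeasureTheory.lintegral_zero]
  have hae : ∀ᵐ y ∂μ, y ∈ measSupport μ ∧ y ≠ 0 := by
    rw [MeasureTheory.ae_iff]
    refine measure_mono_null ?_
      (measure_union_null (compl_measSupport_null μ) (hatomless 0))
    intro y hy
    simp only [Set.mem_setOf_eq] at hy
    push_neg at hy
    by_cases h : y ∈ measSupport μ
    · exact Or.inr (hy h)
    · exact Or.inl h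
  have step8 : (∫⁻ y, (if 0 ≤ y then psiPlusIntegrand μ n y * n (Set.Ici y ∩ Set.Ioi 0) else 0) ∂μ)
      = ∫⁻ y, (Set.Ioi (0:ℝ)).indicator (fun y =>
          (ENNReal.ofReal (1 + (μ (Set.Ici y)).toReal - mubarGinv μ n (Dmu μ n y)))⁻¹) y ∂μ := by
    apply MeasureTheory.lintegral_congr_ae
    filter_upwards [hae] with y hy
    rcases lt_trichotomy y 0 with h | h | h
    · rw [if_neg (not_le.mpr h), Set.indicator_of_notMem (by
        simp only [Set.mem_Ioi, not_lt]
        exact h.le)]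
    · exact absurd h hy.2
    · rw [if_pos h.le]
      have hIci : Set.Ici y ∩ Set.Ioi 0 = Set.Ici y := by
        rw [Set.inter_eq_left]
        intro x hx
        exact lt_of_lt_of_le h hx
      rw [hIci, Set.indicator_of_mem (Set.mem_Ioi.mpr h)]
      have ha0 : n (Set.Ici y) ≠ 0 := (hnsupp y hy.1).2.ne'
      have hatop : n (Set.Ici y) ≠ ⊤ := (hnfin y h).1.ne
      rw [psiPlusIntegrand, ENNReal.mul_inv (Or.inl ha0) (Or.inl hatop),
        mul_comm, ← mul_assoc, ENNReal.mul_inv_cancel ha0 hatop, one_mul]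
  rw [step1, step3, step4, step5, step6]
  rw [MeasureTheory.lintegral_congr step7, step8,
    MeasureTheory.lintegral_indicator measurableSet_Ioi]
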